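/- Let K be a combinatorial d-manifold and let G be a group of automorphisms of the abstract simplicial complex K_a corresponding to K. If G acts properly on K_a (i.e., for every vertex u of K_a and every non-identity element g of G, the distance between u and g(u) in the edge-graph of K_a is at least 3), then the geometric realization of the quotient complex K_a/G is again a combinatorial d-manifold. -/

import Mathlib

open Geometry

namespace MinTri

/-- The ambient Euclidean space `ℝ^N`. -/
abbrev Spc (N : ℕ) : Type := Fin N → ℝ

variable {m n N : ℕ}

/-- `fcount K i` is the number `f_i(K)` of `i`-dimensional simplices of `K`. -/
noncomputable def fcount (K : SimplicialComplex ℝ (Spc N)) (i : ℕ) : ℕ :=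
  {s ∈ K.faces | s.card = i + 1}.ncard

/-- The Euler characteristic `χ(K) = ∑_{i=0}^{d} (-1)^i f_i(K)` of a `d`-dimensional complex. -/
noncomputable def eulerChar (K : SimplicialComplex ℝ (Spc N)) (d : ℕ) : ℤ :=
  ∑ i ∈ Finset.range (d + 1), (-1 : ℤ) ^ i * fcount K i

/-- `f_{i-1}(K)` with the convention `f_{-1} = 1` (so `fcount' K 0 = 1`). -/
noncomputable def fcount' (K : SimplicialComplex ℝ (Spc N)) (i : ℕ) : ℤ :=
  if i = 0 then 1 else (fcount K (i - 1) : ℤ)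

/-- The `h`-vector: `h_j(K) = ∑_{i=-1}^{j-1} (-1)^{j-i-1} C(d-i, j-i-1) f_i(K)`,
reindexed as a sum over `i` from `0` to `j` with `fcount'` (where `fcount' K i = f_{i-1}(K)`). -/
noncomputable def hvec (K : SimplicialComplex ℝ (Spc N)) (d j : ℕ) : ℤ :=
  ∑ i ∈ Finset.range (j + 1),
    (-1 : ℤ) ^ (j - i) * ((d + 1 - i).choose (j - i) : ℤ) * fcount' K i

/-- An isomorphism between two simplicial complexes: an injection on vertices carrying the
faces of one complex exactly onto the faces of the other. -/
def IsIso (K : SimplicialComplex ℝ (Spc m)) (L : SimplicialComplex ℝ (Spc n)) : Prop :=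
  ∃ f : Spc m → Spc n, Set.InjOn f K.vertices ∧
    (∀ s ∈ K.faces, s.image f ∈ L.faces) ∧
    (∀ t ∈ L.faces, ∃ s ∈ K.faces, s.image f = t)

/-- `L` is a subdivision of `K`: same underlying polyhedron and every simplex of `L` is
contained in a simplex of `K`. -/
def IsSubdivisionOf (L K : SimplicialComplex ℝ (Spc N)) : Prop :=
  L.space = K.space ∧
    ∀ s ∈ L.faces, ∃ t ∈ K.faces,
      convexHull ℝ (s : Set (Spc N)) ⊆ convexHull ℝ (t : Set (Spc N))

/-- Two complexes are combinatorially equivalent if they have isomorphic subdivisions. -/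
def CombEquiv (K : SimplicialComplex ℝ (Spc m)) (L : SimplicialComplex ℝ (Spc n)) : Prop :=
  ∃ (K' : SimplicialComplex ℝ (Spc m)) (L' : SimplicialComplex ℝ (Spc n)),
    IsSubdivisionOf K' K ∧ IsSubdivisionOf L' L ∧ IsIso K' L'

/-- `K` is the boundary complex of a geometric `(d+1)`-simplex: its faces are exactly the proper
nonempty subsets of a set `s` of `d+2` affinely independent points (the standard `d`-sphere). -/
def IsStandardSphere (d : ℕ) (K : SimplicialComplex ℝ (Spc N)) : Prop :=
  ∃ s : Finset (Spc N), s.card = d + 2 ∧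
    AffineIndependent ℝ ((↑) : s → Spc N) ∧
    K.faces = {t | t ⊆ s ∧ t ≠ ∅ ∧ t ≠ s}

/-- A combinatorial `d`-sphere: a complex combinatorially equivalent to the boundary complex of
the `(d+1)`-simplex. -/
def IsCombSphere (d : ℕ) (K : SimplicialComplex ℝ (Spc N)) : Prop :=
  ∃ L : SimplicialComplex ℝ (Spc (d + 2)), IsStandardSphere d L ∧ CombEquiv K L

/-- The link of a simplex `σ` in `K`: all faces disjoint from `σ` whose union with `σ`
is again a face. -/
noncomputable def linkOf (K : SimplicialComplex ℝ (Spc N)) (σ : Finset (Spc N)) :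
    SimplicialComplex ℝ (Spc N) where
  faces := {s | s ∈ K.faces ∧ Disjoint s σ ∧ s ∪ σ ∈ K.faces}
  indep h := K.indep h.1
  isRelLowerSet_faces := by
    intro s hs
    refine ⟨K.nonempty_of_mem_faces hs.1, fun t hts ht => ?_⟩
    exact ⟨K.down_closed hs.1 hts ht, Finset.disjoint_of_subset_left hts hs.2.1,
      K.down_closed hs.2.2 (Finset.union_subset_union_left hts)
        (Finset.Nonempty.mono Finset.subset_union_left ht)⟩
  inter_subset_convexHull hs ht := K.inter_subset_convexHull hs.1 ht.1

/-- The link of a vertex. -/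
noncomputable def link (K : SimplicialComplex ℝ (Spc N)) (v : Spc N) :
    SimplicialComplex ℝ (Spc N) :=
  linkOf K {v}

/-- A combinatorial `d`-manifold: a nonempty finite simplicial complex in which the link of
every vertex is a combinatorial `(d-1)`-sphere. -/
def IsCombManifold (d : ℕ) (K : SimplicialComplex ℝ (Spc N)) : Prop :=
  K.faces.Finite ∧ K.faces.Nonempty ∧
    ∀ v ∈ K.vertices, IsCombSphere (d - 1) (link K v)

/-- `K` is pure of dimension `d`: every face has at most `d+1` vertices and is contained in a
face with exactly `d+1` vertices. -/
def IsPure (d : ℕ) (K : SimplicialComplex ℝ (Spc N)) : Prop :=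
  (∀ s ∈ K.faces, s.card ≤ d + 1) ∧
    ∀ s ∈ K.faces, ∃ t ∈ K.faces, t.card = d + 1 ∧ s ⊆ t

/-- A `d`-pseudomanifold: a nonempty pure `d`-dimensional complex in which every `(d-1)`-simplex
lies in exactly two facets, and any two facets are connected by a chain of facets, consecutive
ones meeting in a `(d-1)`-simplex. -/
def IsPseudomanifold (d : ℕ) (K : SimplicialComplex ℝ (Spc N)) : Prop :=
  K.faces.Nonempty ∧ IsPure d K ∧
    (∀ s ∈ K.faces, s.card = d →
      {t | t ∈ K.faces ∧ t.card = d + 1 ∧ s ⊆ t}.ncard = 2) ∧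
    ∀ s ∈ K.faces, ∀ t ∈ K.faces, s.card = d + 1 → t.card = d + 1 →
      ∃ (k : ℕ) (c : Fin (k + 1) → Finset (Spc N)), c 0 = s ∧ c (Fin.last k) = t ∧
        (∀ i, c i ∈ K.faces ∧ (c i).card = d + 1) ∧
        ∀ i : Fin k, (c i.castSucc ∩ c i.succ).card = d

/-- Connectedness of a complex: any two vertices are joined by a path of edges. -/
def ComplexConnected (K : SimplicialComplex ℝ (Spc N)) : Prop :=
  ∀ u ∈ K.vertices, ∀ w ∈ K.vertices,
    ∃ (k : ℕ) (p : Fin (k + 1) → Spc N), p 0 = u ∧ p (Fin.last k) = w ∧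
      ∀ i : Fin k, ({p i.castSucc, p i.succ} : Finset (Spc N)) ∈ K.faces

/-- A normal `d`-pseudomanifold: a `d`-pseudomanifold in which the link of every simplex of
dimension at most `d - 2` is connected. -/
def IsNormalPseudomanifold (d : ℕ) (K : SimplicialComplex ℝ (Spc N)) : Prop :=
  IsPseudomanifold d K ∧
    ∀ σ ∈ K.faces, σ.card + 1 ≤ d → ComplexConnected (linkOf K σ)

/-- `K` is `k`-neighbourly: every `k` vertices span a `(k-1)`-face. -/
def IsNeighbourly (k : ℕ) (K : SimplicialComplex ℝ (Spc N)) : Prop :=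
  ∀ s : Finset (Spc N), (s : Set (Spc N)) ⊆ K.vertices → s.card = k → s ∈ K.faces

/-- `K'` is obtained from `K` by starring the vertex `a` in the facet `σ`:
`a` is an interior point of `σ` and the facet `σ` is replaced by the cones from `a`
over the proper faces of `σ`. -/
def IsStarredFacet (K K' : SimplicialComplex ℝ (Spc N)) (σ : Finset (Spc N)) (a : Spc N) :
    Prop :=
  σ ∈ K.facets ∧ a ∈ convexHull ℝ (σ : Set (Spc N)) ∧
    (∀ τ : Finset (Spc N), τ ⊂ σ → a ∉ convexHull ℝ (τ : Set (Spc N))) ∧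
    K'.faces = (K.faces \ {σ}) ∪
      {s | ∃ τ : Finset (Spc N), τ ⊆ σ ∧ τ ≠ σ ∧ s = insert a τ}

/-- A geometric witness that a complex is a stacked `d`-sphere: a chain of complexes starting at
the boundary complex of a `(d+1)`-simplex, each obtained from the previous one by starring a new
vertex in a facet. -/
def IsStackedSphereSeq (d : ℕ) (K : SimplicialComplex ℝ (Spc N)) : Prop :=
  ∃ (k : ℕ) (c : Fin (k + 1) → SimplicialComplex ℝ (Spc N)),
    IsStandardSphere d (c 0) ∧ c (Fin.last k) = K ∧
    ∀ i : Fin k, ∃ σ a, IsStarredFacet (c i.castSucc) (c i.succ) σ a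

/-- A stacked `d`-sphere (up to isomorphism). -/
def IsStackedSphere (d : ℕ) (K : SimplicialComplex ℝ (Spc m)) : Prop :=
  ∃ (N : ℕ) (L : SimplicialComplex ℝ (Spc N)), IsStackedSphereSeq d L ∧ IsIso K L

/-- `L` is the boundary complex of the polytope `conv V`: the faces of `L` are simplices
spanning exactly the proper (exposed) faces of the polytope; in particular the polytope is
simplicial. -/
def IsBoundaryComplexOfPolytope (L : SimplicialComplex ℝ (Spc N)) (V : Finset (Spc N)) :
    Prop :=
  (∀ s ∈ L.faces, (s : Set (Spc N)) ⊆ (V : Set (Spc N)) ∧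
      IsExposed ℝ (convexHull ℝ (V : Set (Spc N))) (convexHull ℝ (s : Set (Spc N))) ∧
      convexHull ℝ (s : Set (Spc N)) ≠ convexHull ℝ (V : Set (Spc N))) ∧
    ∀ F : Set (Spc N), F.Nonempty → IsExposed ℝ (convexHull ℝ (V : Set (Spc N))) F →
      F ≠ convexHull ℝ (V : Set (Spc N)) → ∃ s ∈ L.faces, F = convexHull ℝ (s : Set (Spc N))

/-- A polytopal `d`-sphere: a complex isomorphic to the boundary complex of a simplicial
`(d+1)`-polytope (a full-dimensional polytope in `ℝ^{d+1}`). -/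
def IsPolytopalSphere (d : ℕ) (K : SimplicialComplex ℝ (Spc m)) : Prop :=
  ∃ (V : Finset (Spc (d + 1))) (L : SimplicialComplex ℝ (Spc (d + 1))),
    affineSpan ℝ (V : Set (Spc (d + 1))) = ⊤ ∧
    IsBoundaryComplexOfPolytope L V ∧ IsIso K L


/-- The edge graph of a simplicial complex. -/
def edgeGraph (K : SimplicialComplex ℝ (Spc N)) : SimpleGraph (Spc N) where
  Adj u w := u ≠ w ∧ ({u, w} : Finset (Spc N)) ∈ K.faces
  symm := ⟨fun u w h => ⟨h.1.symm, by rw [Finset.pair_comm]; exact h.2⟩⟩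
  loopless := ⟨fun u h => h.1 rfl⟩

set_option maxHeartbeats 1000000

section Aux
open Finset Set
variable {M : ℕ}

/-- Weights over a finset with zero sum and zero combination w.r.t. an affinely
independent family vanish. -/
lemma zero_weights {E F : Type*} [AddCommGroup E] [Module ℝ E]
    [AddCommGroup F] [Module ℝ F] {s : Finset E} {q : E → F}
    (h : AffineIndependent ℝ (fun y : s => q ↑y)) {c : E → ℝ}
    (h0 : ∑ y ∈ s, c y = 0) (hv : ∑ y ∈ s, c y • q y = 0) : ∀ y ∈ s, c y = 0 := by
  have := affineIndependent_iff.1 h Finset.univ (fun y : s => c ↑y)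
    (by rw [Finset.sum_coe_sort s c]; exact h0)
    (by rw [Finset.sum_coe_sort s (fun y => c y • q y)]; exact hv)
  intro y hy
  exact this ⟨y, hy⟩ (Finset.mem_univ _)

lemma weights_eq {E F : Type*} [AddCommGroup E] [Module ℝ E]
    [AddCommGroup F] [Module ℝ F] {s : Finset E} {q : E → F}
    (h : AffineIndependent ℝ (fun y : s => q ↑y)) {w1 w2 : E → ℝ}
    (hsum : ∑ y ∈ s, w1 y = ∑ y ∈ s, w2 y)
    (hcomb : ∑ y ∈ s, w1 y • q y = ∑ y ∈ s, w2 y • q y) : ∀ y ∈ s, w1 y = w2 y := by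
  have h0 : ∑ y ∈ s, (w1 y - w2 y) = 0 := by rw [Finset.sum_sub_distrib, hsum, sub_self]
  have hv : ∑ y ∈ s, (w1 y - w2 y) • q y = 0 := by
    simp_rw [sub_smul]
    rw [Finset.sum_sub_distrib, hcomb, sub_self]
  intro y hy
  have := zero_weights h h0 hv y hy
  linarith

lemma sum_swap_smul {E F : Type*} [AddCommGroup E] [Module ℝ E]
    [AddCommGroup F] [Module ℝ F] (u s : Finset E) (c : E → ℝ) (v : E → E → ℝ) (g : E → F) :
    ∑ y ∈ u, c y • (∑ p ∈ s, v y p • g p) = ∑ p ∈ s, (∑ y ∈ u, c y * v y p) • g p := by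
  simp_rw [Finset.smul_sum, smul_smul, Finset.sum_smul]
  exact Finset.sum_comm


open scoped Classical in
/-- The piecewise-barycentric extension of `f` over the complex `A`. -/
noncomputable def phi (A : SimplicialComplex ℝ (Spc N)) (f : Spc N → Spc M) (x : Spc N) :
    Spc M :=
  if h : ∃ s ∈ A.faces, x ∈ convexHull ℝ (s : Set (Spc N)) then
    ∑ y ∈ h.choose, (Finset.mem_convexHull'.1 h.choose_spec.2).choose y • f y
  else f x

/-- Independence of the choice of face and weights: any barycentric representation of `x`
inside a face of `A` computes `phi`. -/
lemma phi_eq (A : SimplicialComplex ℝ (Spc N)) (f : Spc N → Spc M)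
    {s : Finset (Spc N)} (hs : s ∈ A.faces) {x : Spc N} {w : Spc N → ℝ}
    (hw0 : ∀ y ∈ s, 0 ≤ w y) (hw1 : ∑ y ∈ s, w y = 1) (hwx : ∑ y ∈ s, w y • y = x) :
    phi A f x = ∑ y ∈ s, w y • f y := by
  classical
  have hxs : x ∈ convexHull ℝ (s : Set (Spc N)) :=
    Finset.mem_convexHull'.2 ⟨w, hw0, hw1, hwx⟩
  have h : ∃ s ∈ A.faces, x ∈ convexHull ℝ (s : Set (Spc N)) := ⟨s, hs, hxs⟩
  simp only [phi]
  rw [dif_pos h]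
  set s' := h.choose with hs'def
  obtain ⟨hs' , hxs'⟩ := h.choose_spec
  set w' := (Finset.mem_convexHull'.1 hxs').choose with hw'def
  obtain ⟨hw'0, hw'1, hw'x⟩ := (Finset.mem_convexHull'.1 hxs').choose_spec
  -- x lies in the intersection, hence in conv (s ∩ s')
  have hinter : x ∈ convexHull ℝ ((s ∩ s' : Finset (Spc N)) : Set (Spc N)) := by
    rw [Finset.coe_inter]
    exact A.inter_subset_convexHull hs hs' ⟨hxs, hxs'⟩
  obtain ⟨w'', hw''0, hw''1, hw''x⟩ := Finset.mem_convexHull'.1 hinter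
  -- the generic claim: for any face `t` containing `s ∩ s'` with weights `v` representing `x`,
  -- the combination over `t` of `v • f` equals the one over `s ∩ s'` of `w'' • f`.
  have key : ∀ t ∈ A.faces, s ∩ s' ⊆ t → ∀ v : Spc N → ℝ,
      (∑ y ∈ t, v y = 1) → (∑ y ∈ t, v y • y = x) →
      ∑ y ∈ t, v y • f y = ∑ y ∈ s ∩ s', w'' y • f y := by
    intro t ht hsub v hv1 hvx
    have hind : AffineIndependent ℝ (fun y : t => (y : Spc N)) := A.indep ht
    set v2 : Spc N → ℝ := fun y => if y ∈ s ∩ s' then w'' y else 0 with hv2def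
    have hsum2 : ∑ y ∈ t, v2 y = 1 := by
      rw [hv2def]
      rw [Finset.sum_ite_mem t (s ∩ s') w'']
      rwa [Finset.inter_eq_right.2 hsub]
    have hcomb2 : ∑ y ∈ t, v2 y • y = x := by
      rw [hv2def]
      simp only [ite_smul, zero_smul]
      rw [Finset.sum_ite_mem t (s ∩ s') (fun y => w'' y • y),
        Finset.inter_eq_right.2 hsub]
      exact hw''x
    have heq : ∀ y ∈ t, v y = v2 y := by
      apply weights_eq hind (by rw [hv1, hsum2]) (by rw [hvx, hcomb2])
    calc ∑ y ∈ t, v y • f y = ∑ y ∈ t, v2 y • f y := by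
          apply Finset.sum_congr rfl; intro y hy; rw [heq y hy]
      _ = ∑ y ∈ t, (if y ∈ s ∩ s' then w'' y • f y else 0) := by
          simp only [hv2def, ite_smul, zero_smul]
      _ = ∑ y ∈ s ∩ s', w'' y • f y := by
          rw [Finset.sum_ite_mem t (s ∩ s') (fun y => w'' y • f y),
            Finset.inter_eq_right.2 hsub]
  have h1 := key s hs Finset.inter_subset_left w hw1 hwx
  have h2 := key s' hs' Finset.inter_subset_right w' hw'1 hw'x
  rw [h1, ← h2]


/-- Elements of faces are vertices. -/
lemma mem_vertices_of_mem_face {E : Type*} [AddCommGroup E] [Module ℝ E]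
    {K : SimplicialComplex ℝ E} {s : Finset E} (hs : s ∈ K.faces) {y : E} (hy : y ∈ s) :
    y ∈ K.vertices :=
  K.down_closed hs (Finset.singleton_subset_iff.2 hy) (Finset.singleton_nonempty _)

/-- A convex combination of images lies in the hull of the image. -/
lemma combo_mem_image {E F : Type*} [AddCommGroup E] [Module ℝ E]
    [AddCommGroup F] [Module ℝ F] [DecidableEq F] (s : Finset E) (g : E → F) {w : E → ℝ}
    (hw0 : ∀ y ∈ s, 0 ≤ w y) (hw1 : ∑ y ∈ s, w y = 1) :
    ∑ y ∈ s, w y • g y ∈ convexHull ℝ ((s.image g : Finset F) : Set F) := by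
  have := s.centerMass_mem_convexHull hw0 (by rw [hw1]; exact one_pos)
    (fun i hi => Finset.mem_coe.2 (Finset.mem_image_of_mem g hi))
  rwa [Finset.centerMass_eq_of_sum_1 _ _ hw1] at this

lemma phi_repr (A : SimplicialComplex ℝ (Spc N)) (f : Spc N → Spc M)
    {s : Finset (Spc N)} (hs : s ∈ A.faces) {x : Spc N}
    (hx : x ∈ convexHull ℝ (s : Set (Spc N))) :
    ∃ w : Spc N → ℝ, (∀ y ∈ s, 0 ≤ w y) ∧ ∑ y ∈ s, w y = 1 ∧ ∑ y ∈ s, w y • y = x ∧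
      phi A f x = ∑ y ∈ s, w y • f y := by
  obtain ⟨w, hw0, hw1, hwx⟩ := Finset.mem_convexHull'.1 hx
  exact ⟨w, hw0, hw1, hwx, phi_eq A f hs hw0 hw1 hwx⟩

lemma phi_mem_face (A : SimplicialComplex ℝ (Spc N)) (f : Spc N → Spc M)
    {s : Finset (Spc N)} (hs : s ∈ A.faces) {x : Spc N}
    (hx : x ∈ convexHull ℝ (s : Set (Spc N))) :
    phi A f x ∈ convexHull ℝ ((s.image f : Finset (Spc M)) : Set (Spc M)) := by
  classical
  obtain ⟨w, hw0, hw1, _, hphi⟩ := phi_repr A f hs hx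
  rw [hphi]
  exact combo_mem_image s f hw0 hw1

lemma phi_vertex (A : SimplicialComplex ℝ (Spc N)) (f : Spc N → Spc M)
    {y : Spc N} (hy : y ∈ A.vertices) : phi A f y = f y := by
  classical
  have h := phi_eq A f (s := ({y} : Finset (Spc N))) (x := y) (w := fun _ => 1) hy
    (by intro z _; norm_num) (by simp) (by simp)
  simpa using h

lemma phi_image_face (A : SimplicialComplex ℝ (Spc N)) (f : Spc N → Spc M)
    {s : Finset (Spc N)} (hs : s ∈ A.faces) : s.image (phi A f) = s.image f := by
  apply Finset.image_congr
  intro y hy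
  exact phi_vertex A f (mem_vertices_of_mem_face hs hy)

/-- `phi` is affine on convex combinations drawn inside a single face. -/
lemma phi_affine (A : SimplicialComplex ℝ (Spc N)) (f : Spc N → Spc M)
    {s u : Finset (Spc N)} (hs : s ∈ A.faces)
    (hus : (u : Set (Spc N)) ⊆ convexHull ℝ (s : Set (Spc N)))
    {c : Spc N → ℝ} (hc0 : ∀ y ∈ u, 0 ≤ c y) (hc1 : ∑ y ∈ u, c y = 1) :
    phi A f (∑ y ∈ u, c y • y) = ∑ y ∈ u, c y • phi A f y := by
  classical
  have hv : ∀ y ∈ u, ∃ v : Spc N → ℝ, (∀ p ∈ s, 0 ≤ v p) ∧ ∑ p ∈ s, v p = 1 ∧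
      (∑ p ∈ s, v p • p = y) ∧ phi A f y = ∑ p ∈ s, v p • f p :=
    fun y hy => phi_repr A f hs (hus (Finset.mem_coe.2 hy))
  choose! v hv0 hv1 hv2 hv3 using hv
  set W : Spc N → ℝ := fun p => ∑ y ∈ u, c y * v y p with hWdef
  have hW0 : ∀ p ∈ s, 0 ≤ W p := fun p hp => Finset.sum_nonneg fun y hy =>
    mul_nonneg (hc0 y hy) (hv0 y hy p hp)
  have hW1 : ∑ p ∈ s, W p = 1 := by
    rw [hWdef, Finset.sum_comm]
    calc ∑ y ∈ u, ∑ p ∈ s, c y * v y p = ∑ y ∈ u, c y := by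
          apply Finset.sum_congr rfl
          intro y hy
          rw [← Finset.mul_sum, hv1 y hy, mul_one]
      _ = 1 := hc1
  have hWx : ∑ p ∈ s, W p • p = ∑ y ∈ u, c y • y := by
    calc ∑ p ∈ s, W p • p = ∑ y ∈ u, c y • (∑ p ∈ s, v y p • p) :=
          (sum_swap_smul u s c v (fun p => p)).symm
      _ = ∑ y ∈ u, c y • y := Finset.sum_congr rfl fun y hy => by rw [hv2 y hy]
  rw [phi_eq A f hs hW0 hW1 hWx]
  calc ∑ p ∈ s, W p • f p = ∑ y ∈ u, c y • (∑ p ∈ s, v y p • f p) :=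
        (sum_swap_smul u s c v f).symm
    _ = ∑ y ∈ u, c y • phi A f y := Finset.sum_congr rfl fun y hy => by rw [hv3 y hy]

/-- The image under `phi` of a point of `conv u` (with `u` inside a face) lies in the hull
of the `phi`-image of `u`. -/
lemma phi_mem_convex (A : SimplicialComplex ℝ (Spc N)) (f : Spc N → Spc M)
    {s u : Finset (Spc N)} (hs : s ∈ A.faces)
    (hus : (u : Set (Spc N)) ⊆ convexHull ℝ (s : Set (Spc N)))
    {x : Spc N} (hx : x ∈ convexHull ℝ (u : Set (Spc N))) :
    phi A f x ∈ convexHull ℝ ((u.image (phi A f) : Finset (Spc M)) : Set (Spc M)) := by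
  classical
  obtain ⟨c, hc0, hc1, hcx⟩ := Finset.mem_convexHull'.1 hx
  rw [← hcx, phi_affine A f hs hus hc0 hc1]
  exact combo_mem_image u (phi A f) hc0 hc1

/-- Points of the hull of the `phi`-image of `u` are `phi`-images of points of `conv u`,
provided `phi` is injective on `u`. -/
lemma phi_pull (A : SimplicialComplex ℝ (Spc N)) (f : Spc N → Spc M)
    {s u : Finset (Spc N)} (hs : s ∈ A.faces)
    (hus : (u : Set (Spc N)) ⊆ convexHull ℝ (s : Set (Spc N)))
    (hinj : ∀ x ∈ u, ∀ y ∈ u, phi A f x = phi A f y → x = y)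
    {z : Spc M} (hz : z ∈ convexHull ℝ ((u.image (phi A f) : Finset (Spc M)) : Set (Spc M))) :
    ∃ x ∈ convexHull ℝ (u : Set (Spc N)), phi A f x = z := by
  classical
  obtain ⟨w, hw0, hw1, hwz⟩ := Finset.mem_convexHull'.1 hz
  set c : Spc N → ℝ := fun y => w (phi A f y) with hcdef
  have hsum : ∑ y ∈ u, c y = 1 := by
    rw [hcdef, ← Finset.sum_image hinj (f := w)]
    exact hw1
  have hc0 : ∀ y ∈ u, 0 ≤ c y := fun y hy => hw0 _ (Finset.mem_image_of_mem _ hy)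
  refine ⟨∑ y ∈ u, c y • y, Finset.mem_convexHull'.2 ⟨c, hc0, hsum, rfl⟩, ?_⟩
  rw [phi_affine A f hs hus hc0 hsum]
  rw [← hwz, Finset.sum_image hinj]

/-- Points of the hull of the `f`-image of a face `s` are `phi`-images of points of `conv s`,
provided `f` is injective on `s`. -/
lemma phi_pull_face (A : SimplicialComplex ℝ (Spc N)) (f : Spc N → Spc M)
    {s : Finset (Spc N)} (hs : s ∈ A.faces)
    (hinj : ∀ x ∈ s, ∀ y ∈ s, f x = f y → x = y)
    {z : Spc M} (hz : z ∈ convexHull ℝ ((s.image f : Finset (Spc M)) : Set (Spc M))) :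
    ∃ x ∈ convexHull ℝ (s : Set (Spc N)), phi A f x = z := by
  classical
  obtain ⟨w, hw0, hw1, hwz⟩ := Finset.mem_convexHull'.1 hz
  set c : Spc N → ℝ := fun y => w (f y) with hcdef
  have hsum : ∑ y ∈ s, c y = 1 := by
    rw [hcdef, ← Finset.sum_image hinj (f := w)]
    exact hw1
  have hc0 : ∀ y ∈ s, 0 ≤ c y := fun y hy => hw0 _ (Finset.mem_image_of_mem _ hy)
  refine ⟨∑ y ∈ s, c y • y, Finset.mem_convexHull'.2 ⟨c, hc0, hsum, rfl⟩, ?_⟩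
  rw [phi_eq A f hs hc0 hsum rfl]
  rw [← hwz, Finset.sum_image hinj]

/-- Global injectivity of `phi` on the space of `A`. -/
lemma phi_inj (A : SimplicialComplex ℝ (Spc N)) (f : Spc N → Spc M)
    (hindep : ∀ s ∈ A.faces, AffineIndependent ℝ (fun y : s => f ↑y))
    (hinter : ∀ s₁ ∈ A.faces, ∀ s₂ ∈ A.faces,
      convexHull ℝ ((s₁.image f : Finset (Spc M)) : Set (Spc M)) ∩
        convexHull ℝ ((s₂.image f : Finset (Spc M)) : Set (Spc M)) ⊆
        convexHull ℝ (((s₁ ∩ s₂).image f : Finset (Spc M)) : Set (Spc M)))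
    (hfinj : ∀ s ∈ A.faces, ∀ x ∈ s, ∀ y ∈ s, f x = f y → x = y) :
    Set.InjOn (phi A f) A.space := by
  classical
  intro x1 hx1 x2 hx2 heq
  obtain ⟨s1, hs1, hx1s⟩ := SimplicialComplex.mem_space_iff.1 hx1
  obtain ⟨s2, hs2, hx2s⟩ := SimplicialComplex.mem_space_iff.1 hx2
  obtain ⟨w1, hw10, hw11, hw1x, hphi1⟩ := phi_repr A f hs1 hx1s
  obtain ⟨w2, hw20, hw21, hw2x, hphi2⟩ := phi_repr A f hs2 hx2s
  have hm : phi A f x1 ∈ convexHull ℝ (((s1 ∩ s2).image f : Finset (Spc M)) : Set (Spc M)) := by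
    apply hinter s1 hs1 s2 hs2
    exact ⟨phi_mem_face A f hs1 hx1s, heq ▸ phi_mem_face A f hs2 hx2s⟩
  obtain ⟨W, hW0, hW1, hWx⟩ := Finset.mem_convexHull'.1 hm
  have hinj12 : ∀ x ∈ s1 ∩ s2, ∀ y ∈ s1 ∩ s2, f x = f y → x = y :=
    fun x hx y hy => hfinj s1 hs1 x (Finset.mem_of_mem_inter_left hx) y
      (Finset.mem_of_mem_inter_left hy)
  set c : Spc N → ℝ := fun y => W (f y) with hcdef
  have hc1 : ∑ y ∈ s1 ∩ s2, c y = 1 := by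
    rw [hcdef, ← Finset.sum_image hinj12 (f := W)]; exact hW1
  have hcx : ∑ y ∈ s1 ∩ s2, c y • f y = phi A f x1 := by
    rw [← hWx, Finset.sum_image hinj12]
  -- restrict to each of the two faces
  have key : ∀ (t : Finset (Spc N)), t ∈ A.faces → s1 ∩ s2 ⊆ t →
      ∀ w : Spc N → ℝ, (∑ y ∈ t, w y = 1) → (∑ y ∈ t, w y • f y = phi A f x1) →
      ∑ y ∈ t, w y • y = ∑ y ∈ s1 ∩ s2, c y • y := by
    intro t ht hsub w hwsum hwphi
    set c2 : Spc N → ℝ := fun y => if y ∈ s1 ∩ s2 then c y else 0 with hc2def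
    have hsum2 : ∑ y ∈ t, c2 y = 1 := by
      rw [hc2def, Finset.sum_ite_mem t (s1 ∩ s2) c, Finset.inter_eq_right.2 hsub]
      exact hc1
    have hcomb2 : ∑ y ∈ t, c2 y • f y = phi A f x1 := by
      rw [hc2def]
      simp only [ite_smul, zero_smul]
      rw [Finset.sum_ite_mem t (s1 ∩ s2) (fun y => c y • f y),
        Finset.inter_eq_right.2 hsub]
      exact hcx
    have heqw : ∀ y ∈ t, w y = c2 y :=
      weights_eq (hindep t ht) (by rw [hwsum, hsum2]) (by rw [hwphi, hcomb2])
    calc ∑ y ∈ t, w y • y = ∑ y ∈ t, c2 y • y :=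
          Finset.sum_congr rfl fun y hy => by rw [heqw y hy]
      _ = ∑ y ∈ s1 ∩ s2, c y • y := by
          rw [hc2def]
          simp only [ite_smul, zero_smul]
          rw [Finset.sum_ite_mem t (s1 ∩ s2) (fun y => c y • y),
            Finset.inter_eq_right.2 hsub]
  have h1 := key s1 hs1 Finset.inter_subset_left w1 hw11 hphi1.symm
  have h2 := key s2 hs2 Finset.inter_subset_right w2 hw21 (heq ▸ hphi2.symm)
  rw [← hw1x, ← hw2x, h1, h2]

instance : Nonempty (Spc N) := ⟨fun _ => 0⟩

/-- The `phi`-image of an affinely independent finset inside a face is affinely independent. -/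
lemma push_indep (A : SimplicialComplex ℝ (Spc N)) (f : Spc N → Spc M)
    {u s : Finset (Spc N)} (hs : s ∈ A.faces)
    (hus : (u : Set (Spc N)) ⊆ convexHull ℝ (s : Set (Spc N)))
    (huind : AffineIndependent ℝ ((↑) : u → Spc N))
    (hfind : AffineIndependent ℝ (fun y : s => f ↑y)) :
    AffineIndependent ℝ ((↑) : (u.image (phi A f) : Finset (Spc M)) → Spc M) := by
  classical
  -- step 1: weights over `u` with zero sum and zero `phi`-combination vanish
  have key : ∀ c : Spc N → ℝ, ∑ y ∈ u, c y = 0 → ∑ y ∈ u, c y • phi A f y = 0 →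
      ∀ y ∈ u, c y = 0 := by
    intro c hc0 hcphi
    have hv : ∀ y ∈ u, ∃ v : Spc N → ℝ, (∀ p ∈ s, 0 ≤ v p) ∧ ∑ p ∈ s, v p = 1 ∧
        (∑ p ∈ s, v p • p = y) ∧ phi A f y = ∑ p ∈ s, v p • f p :=
      fun y hy => phi_repr A f hs (hus (Finset.mem_coe.2 hy))
    choose! v hv0 hv1 hv2 hv3 using hv
    set W : Spc N → ℝ := fun p => ∑ y ∈ u, c y * v y p with hWdef
    have hWsum : ∑ p ∈ s, W p = 0 := by
      rw [hWdef, Finset.sum_comm]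
      calc ∑ y ∈ u, ∑ p ∈ s, c y * v y p = ∑ y ∈ u, c y := by
            apply Finset.sum_congr rfl
            intro y hy
            rw [← Finset.mul_sum, hv1 y hy, mul_one]
        _ = 0 := hc0
    have hWf : ∑ p ∈ s, W p • f p = 0 := by
      calc ∑ p ∈ s, W p • f p = ∑ y ∈ u, c y • (∑ p ∈ s, v y p • f p) :=
            (sum_swap_smul u s c v f).symm
        _ = ∑ y ∈ u, c y • phi A f y := Finset.sum_congr rfl fun y hy => by rw [hv3 y hy]
        _ = 0 := hcphi
    have hW0 : ∀ p ∈ s, W p = 0 := zero_weights hfind hWsum hWf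
    have hcy : ∑ y ∈ u, c y • y = 0 := by
      calc ∑ y ∈ u, c y • y = ∑ y ∈ u, c y • (∑ p ∈ s, v y p • p) :=
            (Finset.sum_congr rfl fun y hy => by rw [hv2 y hy]).symm
        _ = ∑ p ∈ s, W p • p := sum_swap_smul u s c v (fun p => p)
        _ = 0 := by
            apply Finset.sum_eq_zero
            intro p hp
            rw [hW0 p hp, zero_smul]
    exact zero_weights (q := fun y => y) huind hc0 hcy
  -- step 2: the family `phi ∘ coe` on `u` is affinely independent
  have step2 : AffineIndependent ℝ (fun y : u => phi A f ↑y) := by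
    rw [affineIndependent_iff]
    intro r w hw0 hw1
    set c : Spc N → ℝ := fun y => ∑ i ∈ r, if (i : Spc N) = y then w i else 0 with hcdef
    have hcy : ∀ i ∈ r, c ↑i = w i := by
      intro i hi
      show (∑ j ∈ r, if (j : Spc N) = (↑i : Spc N) then w j else 0) = w i
      have : ∀ j ∈ r, (if ((j : u) : Spc N) = ↑i then w j else 0)
          = if j = i then w j else 0 := by
        intro j _
        congr 1
        exact propext Subtype.ext_iff.symm
      rw [Finset.sum_congr rfl this, Finset.sum_ite_eq' r i w, if_pos hi]
    have hsumc : ∑ y ∈ u, c y = 0 := by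
      rw [hcdef, Finset.sum_comm]
      calc ∑ i ∈ r, ∑ y ∈ u, (if (i : Spc N) = y then w i else 0)
          = ∑ i ∈ r, w i := by
            apply Finset.sum_congr rfl
            intro i _
            rw [Finset.sum_ite_eq u (↑i) (fun _ => w i), if_pos (Finset.coe_mem i)]
        _ = 0 := hw0
    have hveccc : ∑ y ∈ u, c y • phi A f y = 0 := by
      have expand : ∀ y ∈ u, c y • phi A f y
          = ∑ i ∈ r, (if (i : Spc N) = y then w i • phi A f y else 0) := by
        intro y _
        rw [hcdef]
        rw [Finset.sum_smul]
        apply Finset.sum_congr rfl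
        intro i _
        split <;> simp
      rw [Finset.sum_congr rfl expand, Finset.sum_comm]
      calc ∑ i ∈ r, ∑ y ∈ u, (if (i : Spc N) = y then w i • phi A f y else 0)
          = ∑ i ∈ r, w i • phi A f ↑i := by
            apply Finset.sum_congr rfl
            intro i _
            rw [Finset.sum_ite_eq u (↑i) (fun y => w i • phi A f y),
              if_pos (Finset.coe_mem i)]
        _ = 0 := hw1
    intro i hi
    rw [← hcy i hi]
    exact key c hsumc hveccc ↑i (Finset.coe_mem i)
  -- step 3: transport along the inverse of `phi` from the image
  have hmem : ∀ z : (u.image (phi A f) : Finset (Spc M)),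
      ∃ a ∈ (u : Set (Spc N)), phi A f a = (z : Spc M) := by
    rintro ⟨z, hz⟩
    obtain ⟨y, hy, hyz⟩ := Finset.mem_image.1 hz
    exact ⟨y, Finset.mem_coe.2 hy, hyz⟩
  set e : (u.image (phi A f) : Finset (Spc M)) → u :=
    fun z => ⟨Function.invFunOn (phi A f) (u : Set (Spc N)) ↑z,
      Finset.mem_coe.1 (Function.invFunOn_mem (hmem z))⟩ with hedef
  have hphie : ∀ z, phi A f ↑(e z) = (z : Spc M) :=
    fun z => Function.invFunOn_eq (hmem z)
  have einj : Function.Injective e := by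
    intro z1 z2 h
    apply Subtype.ext
    rw [← hphie z1, ← hphie z2, h]
  have := step2.comp_embedding ⟨e, einj⟩
  have hfun : (fun z : (u.image (phi A f) : Finset (Spc M)) => phi A f ↑(e z))
      = fun z : (u.image (phi A f) : Finset (Spc M)) => (z : Spc M) :=
    funext fun z => hphie z
  rw [show ((fun y : u => phi A f ↑y) ∘ (⟨e, einj⟩ : _ ↪ _))
      = (fun z : (u.image (phi A f) : Finset (Spc M)) => phi A f ↑(e z)) from rfl, hfun] at this
  exact this

lemma transfer {A A1 : SimplicialComplex ℝ (Spc N)} {B : SimplicialComplex ℝ (Spc M)}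
    {f : Spc N → Spc M}
    (hfInj : Set.InjOn f A.vertices)
    (hf2 : ∀ s ∈ A.faces, s.image f ∈ B.faces)
    (hf3 : ∀ t ∈ B.faces, ∃ s ∈ A.faces, s.image f = t)
    (hA1 : IsSubdivisionOf A1 A) :
    ∃ B1 : SimplicialComplex ℝ (Spc M), IsSubdivisionOf B1 B ∧ IsIso A1 B1 := by
  classical
  obtain ⟨hsp, hsub⟩ := hA1
  have hfaceinj : ∀ s ∈ A.faces, ∀ x ∈ s, ∀ y ∈ s, f x = f y → x = y := fun s hs x hx y hy h =>
    hfInj (mem_vertices_of_mem_face hs hx) (mem_vertices_of_mem_face hs hy) h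
  have hindep : ∀ s ∈ A.faces, AffineIndependent ℝ (fun y : s => f ↑y) := by
    intro s hs
    have h := B.indep (hf2 s hs)
    exact h.comp_embedding (⟨fun (y : {x // x ∈ s}) =>
      (⟨f ↑y, Finset.mem_image_of_mem f y.2⟩ : {z // z ∈ s.image f}), by
      intro y1 y2 h12
      apply Subtype.ext
      exact hfaceinj s hs _ y1.2 _ y2.2 (congrArg Subtype.val h12)⟩ :
        {x // x ∈ s} ↪ {z // z ∈ s.image f})
  have himg_inter : ∀ s₁ ∈ A.faces, ∀ s₂ ∈ A.faces,
      (s₁ ∩ s₂).image f = s₁.image f ∩ s₂.image f := by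
    intro s₁ h₁ s₂ h₂
    refine Finset.image_inter_of_injOn _ _ (hfInj.mono ?_)
    intro x hx
    rcases Finset.mem_union.1 (Finset.mem_coe.1 (by exact_mod_cast hx)) with hx' | hx'
    exacts [mem_vertices_of_mem_face h₁ hx', mem_vertices_of_mem_face h₂ hx']
  have hinter : ∀ s₁ ∈ A.faces, ∀ s₂ ∈ A.faces,
      convexHull ℝ ((s₁.image f : Finset (Spc M)) : Set (Spc M)) ∩
        convexHull ℝ ((s₂.image f : Finset (Spc M)) : Set (Spc M)) ⊆
        convexHull ℝ (((s₁ ∩ s₂).image f : Finset (Spc M)) : Set (Spc M)) := by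
    intro s₁ h₁ s₂ h₂
    have h := B.inter_subset_convexHull (hf2 s₁ h₁) (hf2 s₂ h₂)
    rw [himg_inter s₁ h₁ s₂ h₂, Finset.coe_inter]
    exact h
  have hphiinj := phi_inj A f hindep hinter hfaceinj
  have hface : ∀ u ∈ A1.faces, ∃ s ∈ A.faces,
      ((u : Set (Spc N)) ⊆ convexHull ℝ (s : Set (Spc N)) ∧
        convexHull ℝ (u : Set (Spc N)) ⊆ convexHull ℝ (s : Set (Spc N))) := by
    intro u hu
    obtain ⟨s, hs, hconv⟩ := hsub u hu
    exact ⟨s, hs, (subset_convexHull ℝ (u : Set (Spc N))).trans hconv, hconv⟩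
  have huspace : ∀ u ∈ A1.faces, convexHull ℝ (u : Set (Spc N)) ⊆ A.space := by
    intro u hu
    obtain ⟨s, hs, _, hconv⟩ := hface u hu
    exact hconv.trans (SimplicialComplex.convexHull_subset_space hs)
  have huinj : ∀ u ∈ A1.faces, ∀ x ∈ u, ∀ y ∈ u, phi A f x = phi A f y → x = y := by
    intro u hu x hx y hy h
    exact hphiinj (huspace u hu (subset_convexHull ℝ _ (Finset.mem_coe.2 hx)))
      (huspace u hu (subset_convexHull ℝ _ (Finset.mem_coe.2 hy))) h
  refine ⟨{ faces := {t | ∃ u ∈ A1.faces, t = u.image (phi A f)}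
            isRelLowerSet_faces := ?_
            indep := ?_
            inter_subset_convexHull := ?_ }, ⟨?_, ?_⟩, ?_⟩
  · intro t ht
    refine ⟨?_, fun t' htt' ht' => ?_⟩
    · obtain ⟨u, hu, rfl⟩ := ht
      simpa using A1.nonempty_of_mem_faces hu
    obtain ⟨u, hu, rfl⟩ := ht
    refine ⟨u.filter (fun y => phi A f y ∈ t'), A1.down_closed hu (Finset.filter_subset _ _) ?_, ?_⟩
    · obtain ⟨z, hz⟩ := ht'
      obtain ⟨y, hy, hyz⟩ := Finset.mem_image.1 (htt' hz)
      exact ⟨y, Finset.mem_filter.2 ⟨hy, hyz.symm ▸ hz⟩⟩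
    · apply Finset.Subset.antisymm
      · intro z hz
        obtain ⟨y, hy, hyz⟩ := Finset.mem_image.1 (htt' hz)
        exact Finset.mem_image.2 ⟨y, Finset.mem_filter.2 ⟨hy, by rw [hyz]; exact hz⟩, hyz⟩
      · intro z hz
        obtain ⟨y, hy, hyz⟩ := Finset.mem_image.1 hz
        exact hyz ▸ (Finset.mem_filter.1 hy).2
  · rintro t ⟨u, hu, rfl⟩
    obtain ⟨s, hs, hus, _⟩ := hface u hu
    exact push_indep A f hs hus (A1.indep hu) (hindep s hs)
  · rintro t1 t2 ⟨u1, hu1, rfl⟩ ⟨u2, hu2, rfl⟩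
    intro z hz
    obtain ⟨s1, hs1, hus1, hcs1⟩ := hface u1 hu1
    obtain ⟨s2, hs2, hus2, hcs2⟩ := hface u2 hu2
    obtain ⟨x1, hx1, hx1z⟩ := phi_pull A f hs1 hus1 (huinj u1 hu1) hz.1
    obtain ⟨x2, hx2, hx2z⟩ := phi_pull A f hs2 hus2 (huinj u2 hu2) hz.2
    have hx12 : x1 = x2 := hphiinj (huspace u1 hu1 hx1) (huspace u2 hu2 hx2)
      (by rw [hx1z, hx2z])
    have hxint : x1 ∈ convexHull ℝ ((u1 ∩ u2 : Finset (Spc N)) : Set (Spc N)) := by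
      rw [Finset.coe_inter]
      exact A1.inter_subset_convexHull hu1 hu2 ⟨hx1, hx12 ▸ hx2⟩
    have h12 : ((u1 ∩ u2 : Finset (Spc N)) : Set (Spc N)) ⊆ convexHull ℝ (s1 : Set (Spc N)) :=
      fun y hy => hus1 (Set.mem_of_mem_of_subset hy (by exact_mod_cast Finset.inter_subset_left))
    have := phi_mem_convex A f hs1 h12 hxint
    rw [hx1z] at this
    refine convexHull_mono ?_ this
    intro w hw
    obtain ⟨y, hy, hyw⟩ := Finset.mem_image.1 (Finset.mem_coe.1 hw)
    exact ⟨Finset.mem_coe.2 (hyw ▸ Finset.mem_image_of_mem _ (Finset.mem_of_mem_inter_left hy)),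
      Finset.mem_coe.2 (hyw ▸ Finset.mem_image_of_mem _ (Finset.mem_of_mem_inter_right hy))⟩
  -- space equality
  · apply Set.Subset.antisymm
    · intro z hz
      obtain ⟨t, ht, hzt⟩ := SimplicialComplex.mem_space_iff.1 hz
      obtain ⟨u, hu, rfl⟩ := ht
      obtain ⟨s, hs, hus, hcs⟩ := hface u hu
      obtain ⟨x, hx, hxz⟩ := phi_pull A f hs hus (huinj u hu) hzt
      rw [← hxz]
      exact SimplicialComplex.mem_space_iff.2 ⟨s.image f, hf2 s hs,
        phi_mem_face A f hs (hcs hx)⟩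
    · intro z hz
      obtain ⟨t, ht, hzt⟩ := SimplicialComplex.mem_space_iff.1 hz
      obtain ⟨s, hs, rfl⟩ := hf3 t ht
      obtain ⟨x, hx, hxz⟩ := phi_pull_face A f hs (hfaceinj s hs) hzt
      have hxA : x ∈ A1.space := by
        rw [hsp]
        exact SimplicialComplex.mem_space_iff.2 ⟨s, hs, hx⟩
      obtain ⟨u, hu, hxu⟩ := SimplicialComplex.mem_space_iff.1 hxA
      obtain ⟨s', hs', hus', _⟩ := hface u hu
      rw [← hxz]
      exact SimplicialComplex.mem_space_iff.2 ⟨u.image (phi A f), ⟨u, hu, rfl⟩,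
        phi_mem_convex A f hs' hus' hxu⟩
  · rintro t ⟨u, hu, rfl⟩
    obtain ⟨s, hs, hus, hcs⟩ := hface u hu
    refine ⟨s.image f, hf2 s hs, ?_⟩
    intro z hz
    obtain ⟨x, hx, hxz⟩ := phi_pull A f hs hus (huinj u hu) hz
    rw [← hxz]
    exact phi_mem_face A f hs (hcs hx)
  · refine ⟨phi A f, ?_, ?_, ?_⟩
    · intro x hx y hy h
      have hxs : x ∈ A.space := by
        rw [← hsp]
        exact SimplicialComplex.vertices_subset_space hx
      have hys : y ∈ A.space := by
        rw [← hsp]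
        exact SimplicialComplex.vertices_subset_space hy
      exact hphiinj hxs hys h
    · intro u hu
      exact ⟨u, hu, rfl⟩
    · rintro t ⟨u, hu, rfl⟩
      exact ⟨u, hu, rfl⟩

lemma vertex_image {K : SimplicialComplex ℝ (Spc m)} {L : SimplicialComplex ℝ (Spc n)}
    {f : Spc m → Spc n} (hmap : ∀ s ∈ K.faces, s.image f ∈ L.faces)
    {y : Spc m} (hy : y ∈ K.vertices) : f y ∈ L.vertices := by
  have := hmap {y} hy
  rwa [Finset.image_singleton] at this

lemma isIso_symm {K : SimplicialComplex ℝ (Spc m)} {L : SimplicialComplex ℝ (Spc n)}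
    (h : IsIso K L) : IsIso L K := by
  classical
  obtain ⟨f, hinj, hmap, honto⟩ := h
  set ψ := Function.invFunOn f K.vertices with hψ
  have hleft : ∀ y ∈ K.vertices, ψ (f y) = y := fun y hy => hinj.leftInvOn_invFunOn hy
  have hvert : ∀ z ∈ L.vertices, ∃ y ∈ K.vertices, f y = z := by
    intro z hz
    obtain ⟨s, hs, hseq⟩ := honto {z} hz
    obtain ⟨y, hy⟩ := K.nonempty_of_mem_faces hs
    refine ⟨y, mem_vertices_of_mem_face hs hy, ?_⟩
    have := Finset.mem_image_of_mem f hy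
    rw [hseq] at this
    exact Finset.mem_singleton.1 this
  have himg : ∀ s ∈ K.faces, (s.image f).image ψ = s := by
    intro s hs
    rw [Finset.image_image]
    calc s.image (ψ ∘ f) = s.image id := Finset.image_congr fun y hy =>
          hleft y (mem_vertices_of_mem_face hs hy)
      _ = s := Finset.image_id
  refine ⟨ψ, ?_, ?_, ?_⟩
  · intro a ha b hb hab
    obtain ⟨y, hy, rfl⟩ := hvert a ha
    obtain ⟨y', hy', rfl⟩ := hvert b hb
    rw [hleft y hy, hleft y' hy'] at hab
    rw [hab]
  · intro t ht
    obtain ⟨s, hs, rfl⟩ := honto t ht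
    rw [himg s hs]
    exact hs
  · intro s hs
    exact ⟨s.image f, hmap s hs, himg s hs⟩

lemma isIso_trans {N' : ℕ} {K : SimplicialComplex ℝ (Spc m)} {L : SimplicialComplex ℝ (Spc n)}
    {J : SimplicialComplex ℝ (Spc N')} (h1 : IsIso K L) (h2 : IsIso L J) : IsIso K J := by
  obtain ⟨f, hfinj, hfmap, hfonto⟩ := h1
  obtain ⟨g, hginj, hgmap, hgonto⟩ := h2
  refine ⟨g ∘ f, ?_, ?_, ?_⟩
  · intro a ha b hb hab
    exact hfinj ha hb (hginj (vertex_image hfmap ha) (vertex_image hfmap hb) hab)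
  · intro s hs
    rw [← Finset.image_image]
    exact hgmap _ (hfmap s hs)
  · intro t ht
    obtain ⟨u, hu, rfl⟩ := hgonto t ht
    obtain ⟨s, hs, rfl⟩ := hfonto u hu
    exact ⟨s, hs, by rw [Finset.image_image]⟩

lemma isIso_combSphere {e : ℕ} {A : SimplicialComplex ℝ (Spc N)}
    {B : SimplicialComplex ℝ (Spc M)} (hAB : IsIso A B) (h : IsCombSphere e A) :
    IsCombSphere e B := by
  obtain ⟨Lstd, hstd, A1, L1, hA1, hL1, hIso⟩ := h
  obtain ⟨f, hinj, hmap, honto⟩ := hAB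
  obtain ⟨B1, hB1, hIso1⟩ := transfer hinj hmap honto hA1
  exact ⟨Lstd, hstd, B1, L1, hB1, hL1, isIso_trans (isIso_symm hIso1) hIso⟩

end Aux

/-- If a group `G` of automorphisms of (the abstract simplicial complex of) a combinatorial
`d`-manifold `K` acts properly (every vertex is moved to distance `≥ 3` in the edge graph by
every non-identity element), then any geometric realization of the quotient complex `K/G`
is again a combinatorial `d`-manifold. -/
theorem quotient_by_proper_action_isCombManifold
    {N d : ℕ} (K : SimplicialComplex ℝ (Spc N)) (hK : IsCombManifold d K)
    (G : Subgroup (Equiv.Perm (Spc N)))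
    (hAut : ∀ g ∈ G, ∀ s : Finset (Spc N), s ∈ K.faces ↔ s.image g ∈ K.faces)
    (hProper : ∀ g ∈ G, g ≠ 1 → ∀ v ∈ K.vertices,
      ∀ p : (edgeGraph K).Walk v (g v), 3 ≤ p.length)
    (M : ℕ) (L : SimplicialComplex ℝ (Spc M)) (f : Spc N → Spc M)
    (hOrbit : ∀ u ∈ K.vertices, ∀ w ∈ K.vertices, (f u = f w ↔ ∃ g ∈ G, g u = w))
    (hQuot : L.faces = {t | ∃ s ∈ K.faces, t = s.image f}) :
    IsCombManifold d L := by
  classical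
  obtain ⟨hfin, hne, hlink⟩ := hK
  have hgvert : ∀ g ∈ G, ∀ x ∈ K.vertices, (g : Equiv.Perm (Spc N)) x ∈ K.vertices := by
    intro g hg x hx
    have := (hAut g hg {x}).1 hx
    rwa [Finset.image_singleton] at this
  have hfg : ∀ g ∈ G, ∀ x ∈ K.vertices, f ((g : Equiv.Perm (Spc N)) x) = f x := by
    intro g hg x hx
    exact (hOrbit (g x) (hgvert g hg x hx) x hx).2 ⟨g⁻¹, inv_mem hg, g.symm_apply_apply x⟩
  refine ⟨?_, ?_, ?_⟩
  · rw [hQuot]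
    have : {t | ∃ s ∈ K.faces, t = Finset.image f s} = (fun s => s.image f) '' K.faces := by
      ext t
      simp only [Set.mem_setOf_eq, Set.mem_image]
      constructor
      · rintro ⟨s, hs, rfl⟩; exact ⟨s, hs, rfl⟩
      · rintro ⟨s, hs, rfl⟩; exact ⟨s, hs, rfl⟩
    rw [this]
    exact hfin.image _
  · obtain ⟨s, hs⟩ := hne
    exact ⟨s.image f, by rw [hQuot]; exact ⟨s, hs, rfl⟩⟩
  · intro v' hv'
    have hv'face : {v'} ∈ L.faces := hv'
    rw [hQuot] at hv'face
    obtain ⟨s0, hs0, hs0eq⟩ := hv'face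
    obtain ⟨v, hv⟩ := K.nonempty_of_mem_faces hs0
    have hfv : f v = v' := by
      have := Finset.mem_image_of_mem f hv
      rw [← hs0eq] at this
      exact Finset.mem_singleton.1 this
    have hvK : v ∈ K.vertices := mem_vertices_of_mem_face hs0 hv
    -- star injectivity
    have hstar : ∀ x y : Spc N, ({x, v} ∈ K.faces ∨ x = v) → ({y, v} ∈ K.faces ∨ y = v) →
        f x = f y → x = y := by
      intro x y hx hy hfxy
      have hxV : x ∈ K.vertices := by
        rcases hx with h | h
        · exact mem_vertices_of_mem_face h (by simp)
        · rw [h]; exact hvK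
      have hyV : y ∈ K.vertices := by
        rcases hy with h | h
        · exact mem_vertices_of_mem_face h (by simp)
        · rw [h]; exact hvK
      obtain ⟨g, hg, hgx⟩ := (hOrbit x hxV y hyV).1 hfxy
      by_cases hg1 : g = 1
      · rw [hg1] at hgx
        simpa using hgx
      · exfalso
        by_cases hxy : x = y
        · have := hProper g hg hg1 x hxV
            ((SimpleGraph.Walk.nil' x).copy rfl (by rw [hgx, ← hxy]))
          simp [SimpleGraph.Walk.length_copy] at this
        · by_cases hxv : x = v
          · -- x = v, y ≠ v
            have hyv : y ≠ v := fun h => hxy (by rw [hxv, h])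
            rcases hy with hyf | hyf; swap
            · exact hyv hyf
            have hadj : (edgeGraph K).Adj x y := by
              show _ ≠ _ ∧ _
              refine ⟨hxy, ?_⟩
              rw [hxv, Finset.pair_comm]
              exact hyf
            have := hProper g hg hg1 x hxV ((hadj.toWalk).copy rfl hgx.symm)
            simp [SimpleGraph.Walk.length_copy] at this
          · by_cases hyv : y = v
            · rcases hx with hxf | hxf; swap
              · exact hxv hxf
              have hadj : (edgeGraph K).Adj x y := by
                show _ ≠ _ ∧ _
                refine ⟨hxy, ?_⟩
                rw [hyv]
                exact hxf
              have := hProper g hg hg1 x hxV ((hadj.toWalk).copy rfl hgx.symm)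
              simp [SimpleGraph.Walk.length_copy] at this
            · rcases hx with hxf | hxf; swap
              · exact hxv hxf
              rcases hy with hyf | hyf; swap
              · exact hyv hyf
              have hadj1 : (edgeGraph K).Adj x v := (show _ ≠ _ ∧ _ from ⟨hxv, hxf⟩)
              have hadj2 : (edgeGraph K).Adj v y := by
                show _ ≠ _ ∧ _
                refine ⟨fun h => hyv h.symm, ?_⟩
                rw [Finset.pair_comm]
                exact hyf
              have := hProper g hg hg1 x hxV
                ((SimpleGraph.Walk.cons hadj1 hadj2.toWalk).copy rfl hgx.symm)
              simp [SimpleGraph.Walk.length_copy] at this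
    -- link faces of K at v
    have hlinkK : ∀ {s : Finset (Spc N)}, s ∈ (link K v).faces ↔
        (s ∈ K.faces ∧ Disjoint s {v} ∧ s ∪ {v} ∈ K.faces) := fun {s} => Iff.rfl
    have hlinkL : ∀ {t : Finset (Spc M)}, t ∈ (link L v').faces ↔
        (t ∈ L.faces ∧ Disjoint t {v'} ∧ t ∪ {v'} ∈ L.faces) := fun {t} => Iff.rfl
    have hpair : ∀ {x : Spc N} {s : Finset (Spc N)}, x ∈ s → s ∪ {v} ∈ K.faces →
        ({x, v} : Finset (Spc N)) ∈ K.faces := by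
      intro x s hx hs
      apply K.down_closed hs
      · intro z hz
        rcases Finset.mem_insert.1 hz with rfl | hz
        · exact Finset.mem_union_left _ hx
        · rw [Finset.mem_singleton.1 hz]
          exact Finset.mem_union_right _ (Finset.mem_singleton_self v)
      · exact Finset.insert_nonempty _ _
    -- the iso between links
    have hinjA : Set.InjOn f (link K v).vertices := by
      intro x hx y hy h
      have hx' := hlinkK.1 hx
      have hy' := hlinkK.1 hy
      exact hstar x y (Or.inl (hpair (Finset.mem_singleton_self x) hx'.2.2))
        (Or.inl (hpair (Finset.mem_singleton_self y) hy'.2.2)) h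
    have hmapA : ∀ s ∈ (link K v).faces, s.image f ∈ (link L v').faces := by
      intro s hs
      obtain ⟨hsK, hdisj, hsv⟩ := hlinkK.1 hs
      refine hlinkL.2 ⟨?_, ?_, ?_⟩
      · rw [hQuot]; exact ⟨s, hsK, rfl⟩
      · rw [Finset.disjoint_singleton_right]
        intro hmem
        obtain ⟨x, hxs, hfx⟩ := Finset.mem_image.1 hmem
        have hxv : x ≠ v := by
          intro h
          exact Finset.disjoint_singleton_right.1 hdisj (h ▸ hxs)
        exact hxv (hstar x v (Or.inl (hpair hxs hsv)) (Or.inr rfl) (by rw [hfx, hfv]))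
      · rw [← hfv, ← Finset.image_singleton (f := f), ← Finset.image_union, hQuot]
        exact ⟨s ∪ {v}, hsv, rfl⟩
    have hontoA : ∀ t' ∈ (link L v').faces, ∃ s ∈ (link K v).faces, s.image f = t' := by
      intro t' ht'
      obtain ⟨htL, hdisj', hunion⟩ := hlinkL.1 ht'
      have hunion' := hunion
      rw [hQuot] at hunion'
      obtain ⟨u, huK, hueq⟩ := hunion'
      have hv'mem : v' ∈ u.image f := by
        rw [← hueq]
        exact Finset.mem_union_right _ (Finset.mem_singleton_self v')
      obtain ⟨w, hw, hfw⟩ := Finset.mem_image.1 hv'mem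
      have hwV := mem_vertices_of_mem_face huK hw
      obtain ⟨g, hg, hgw⟩ := (hOrbit w hwV v hvK).1 (by rw [hfw, hfv])
      set u' := u.image (g : Equiv.Perm (Spc N)) with hu'def
      have hu' : u' ∈ K.faces := (hAut g hg u).1 huK
      have hvu' : v ∈ u' := hgw ▸ Finset.mem_image_of_mem _ hw
      have hfu' : u'.image f = u.image f := by
        rw [hu'def, Finset.image_image]
        exact Finset.image_congr fun x hx => hfg g hg x (mem_vertices_of_mem_face huK hx)
      have hstarU : ∀ x ∈ u', ({x, v} : Finset (Spc N)) ∈ K.faces ∨ x = v := by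
        intro x hx
        by_cases hxv : x = v
        · exact Or.inr hxv
        · refine Or.inl (K.down_closed hu' ?_ (Finset.insert_nonempty _ _))
          intro z hz
          rcases Finset.mem_insert.1 hz with rfl | hz
          · exact hx
          · rw [Finset.mem_singleton.1 hz]; exact hvu'
      have hinjU : ∀ x ∈ u', ∀ y ∈ u', f x = f y → x = y := by
        intro x hx y hy h
        exact hstar x y (hstarU x hx) (hstarU y hy) h
      set st := u'.erase v with hstdef
      -- a nonempty witness
      obtain ⟨z0, hz0⟩ := L.nonempty_of_mem_faces htL
      have hz0u : z0 ∈ u'.image f := by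
        rw [hfu', ← hueq]
        exact Finset.mem_union_left _ hz0
      obtain ⟨x0, hx0, hx0z⟩ := Finset.mem_image.1 hz0u
      have hx0v : x0 ≠ v := by
        intro h
        rw [h, hfv] at hx0z
        exact Finset.disjoint_singleton_right.1 hdisj' (hx0z ▸ hz0)
      have hstne : st ≠ ∅ := Finset.ne_empty_of_mem (Finset.mem_erase.2 ⟨hx0v, hx0⟩)
      have hstK : st ∈ K.faces := K.down_closed hu' (Finset.erase_subset _ _) ⟨x0, Finset.mem_erase.2 ⟨hx0v, hx0⟩⟩
      have hstv : st ∪ {v} = u' := by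
        rw [Finset.union_comm, ← Finset.insert_eq, hstdef, Finset.insert_erase hvu']
      refine ⟨st, hlinkK.2 ⟨hstK, ?_, ?_⟩, ?_⟩
      · rw [Finset.disjoint_singleton_right]
        exact Finset.notMem_erase _ _
      · rw [hstv]; exact hu'
      · -- st.image f = t'
        apply Finset.Subset.antisymm
        · intro z hz
          obtain ⟨x, hx, hxz⟩ := Finset.mem_image.1 hz
          have hxu' : x ∈ u' := Finset.mem_of_mem_erase hx
          have hzu : z ∈ t' ∪ {v'} := by
            rw [hueq, ← hfu']
            exact hxz ▸ Finset.mem_image_of_mem f hxu'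
          rcases Finset.mem_union.1 hzu with h | h
          · exact h
          · exfalso
            have : x = v := hinjU x hxu' v hvu' (by rw [hxz, Finset.mem_singleton.1 h, hfv])
            exact (Finset.mem_erase.1 hx).1 this
        · intro z hz
          have hzu : z ∈ u'.image f := by
            rw [hfu', ← hueq]
            exact Finset.mem_union_left _ hz
          obtain ⟨x, hx, hxz⟩ := Finset.mem_image.1 hzu
          have hxv : x ≠ v := by
            intro h
            rw [h, hfv] at hxz
            exact Finset.disjoint_singleton_right.1 hdisj' (hxz ▸ hz)
          exact Finset.mem_image.2 ⟨x, Finset.mem_erase.2 ⟨hxv, hx⟩, hxz⟩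
    exact isIso_combSphere ⟨f, hinjA, hmapA, hontoA⟩ (hlink v hvK)

end MinTri
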